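/- arXiv:1906.00921 — 8 statements merged into one kernel-verified Lean document; each statement's English description precedes it below -/
import Mathlib

section
/- Every open immersion of schemes is a regular monomorphism: if f : X → Y is an open immersion, then f is the equalizer of the two canonical inclusions Y ⇉ Y ⊔_X Y into the pushout of Y ← X → Y. -/
open CategoryTheory CategoryTheory.Limits AlgebraicGeometry

noncomputable section OpenImmersionRegularMonoAux

namespace OpenImmersionRegularMonoAux

universe u

variable {X Y : Scheme.{u}} (f : X ⟶ Y) [IsOpenImmersion f]

/-- The pieces being intersected: `Y` on the diagonal, `X` off it. -/
def Vmk (X Y : Scheme.{u}) : Bool → Bool → Scheme.{u}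
  | false, false => Y
  | true, true => Y
  | _, _ => X

/-- The open immersions of the pieces into the two copies of `Y`. -/
def fmk : ∀ i j : Bool, Vmk X Y i j ⟶ Y
  | false, false => 𝟙 Y
  | true, true => 𝟙 Y
  | false, true => f
  | true, false => f

/-- The transition maps (identities, since `Vmk` is symmetric). -/
def tmk : ∀ i j : Bool, Vmk X Y i j ⟶ Vmk X Y j i
  | false, false => 𝟙 _
  | true, true => 𝟙 _
  | false, true => 𝟙 _
  | true, false => 𝟙 _

omit [IsOpenImmersion f] in
lemma pb_id_left : pullback.fst (𝟙 Y) f = pullback.snd (𝟙 Y) f ≫ f := by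
  have h := pullback.condition (f := 𝟙 Y) (g := f)
  rwa [Category.comp_id] at h

omit [IsOpenImmersion f] in
lemma pb_id_right : pullback.snd f (𝟙 Y) = pullback.fst f (𝟙 Y) ≫ f := by
  have h := pullback.condition (f := f) (g := 𝟙 Y)
  rw [Category.comp_id] at h
  exact h.symm

omit [IsOpenImmersion f] in
lemma pb_id_id : pullback.fst (𝟙 Y) (𝟙 Y) = pullback.snd (𝟙 Y) (𝟙 Y) := by
  have h := pullback.condition (f := 𝟙 Y) (g := 𝟙 Y)
  rwa [Category.comp_id, Category.comp_id] at h

lemma pb_self : pullback.fst f f = pullback.snd f f := by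
  rw [← cancel_mono f]; exact pullback.condition

/-- Transition map `pullback (𝟙 Y) (𝟙 Y) ⟶ pullback (𝟙 Y) (𝟙 Y)`. -/
def tA : pullback (𝟙 Y) (𝟙 Y) ⟶ pullback (𝟙 Y) (𝟙 Y) :=
  pullback.lift (pullback.fst (𝟙 Y) (𝟙 Y)) (pullback.fst (𝟙 Y) (𝟙 Y)) rfl

/-- Transition map `pullback (𝟙 Y) f ⟶ pullback f (𝟙 Y)`. -/
def tB : pullback (𝟙 Y) f ⟶ pullback f (𝟙 Y) :=
  pullback.lift (pullback.snd (𝟙 Y) f) (pullback.fst (𝟙 Y) f)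
    (by rw [Category.comp_id, pb_id_left])

/-- Transition map `pullback f (𝟙 Y) ⟶ pullback f f`. -/
def tC : pullback f (𝟙 Y) ⟶ pullback f f :=
  pullback.lift (pullback.fst f (𝟙 Y)) (pullback.fst f (𝟙 Y)) rfl

/-- Transition map `pullback f f ⟶ pullback (𝟙 Y) f`. -/
def tD : pullback f f ⟶ pullback (𝟙 Y) f :=
  pullback.lift (pullback.fst f f ≫ f) (pullback.fst f f) (Category.comp_id _)

/-- The transition maps on double intersections. -/
def t'mk : ∀ i j k : Bool,
    pullback (fmk f i j) (fmk f i k) ⟶ pullback (fmk f j k) (fmk f j i)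
  | false, false, false => tA (Y := Y)
  | true, true, true => tA (Y := Y)
  | false, false, true => tB f
  | true, true, false => tB f
  | false, true, false => tC f
  | true, false, true => tC f
  | false, true, true => tD f
  | true, false, false => tD f

/- t_fac, clean-typed. -/
lemma tfac_A : tA (Y := Y) ≫ pullback.snd (𝟙 Y) (𝟙 Y) = pullback.fst (𝟙 Y) (𝟙 Y) ≫ 𝟙 Y := by
  rw [tA, pullback.lift_snd, Category.comp_id]
lemma tfac_B : tB f ≫ pullback.snd f (𝟙 Y) = pullback.fst (𝟙 Y) f ≫ 𝟙 Y := by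
  rw [tB, pullback.lift_snd, Category.comp_id]
lemma tfac_C : tC f ≫ pullback.snd f f = pullback.fst f (𝟙 Y) ≫ 𝟙 X := by
  rw [tC, pullback.lift_snd, Category.comp_id]
lemma tfac_D : tD f ≫ pullback.snd (𝟙 Y) f = pullback.fst f f ≫ 𝟙 X := by
  rw [tD, pullback.lift_snd, Category.comp_id]

/- Cocycle conditions, clean-typed. -/
lemma coc_A : tA (Y := Y) ≫ tA (Y := Y) ≫ tA (Y := Y) = 𝟙 (pullback (𝟙 Y) (𝟙 Y)) := by
  apply pullback.hom_ext <;> simp only [tA, Category.assoc, pullback.lift_fst, pullback.lift_snd, pullback.lift_fst_assoc, pullback.lift_snd_assoc, Category.id_comp, Category.comp_id, pb_id_id (Y := Y)]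
lemma coc_BCD : tB f ≫ tC f ≫ tD f = 𝟙 (pullback (𝟙 Y) f) := by
  apply pullback.hom_ext <;> simp only [tB, tC, tD, Category.assoc, pullback.lift_fst, pullback.lift_snd, pullback.lift_fst_assoc, pullback.lift_snd_assoc, Category.id_comp, Category.comp_id, pb_id_left f, pb_self f]
lemma coc_CDB : tC f ≫ tD f ≫ tB f = 𝟙 (pullback f (𝟙 Y)) := by
  apply pullback.hom_ext <;> simp only [tB, tC, tD, Category.assoc, pullback.lift_fst, pullback.lift_snd, pullback.lift_fst_assoc, pullback.lift_snd_assoc, Category.id_comp, Category.comp_id, pb_id_right f, pb_self f]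
lemma coc_DBC : tD f ≫ tB f ≫ tC f = 𝟙 (pullback f f) := by
  apply pullback.hom_ext <;> simp only [tB, tC, tD, Category.assoc, pullback.lift_fst, pullback.lift_snd, pullback.lift_fst_assoc, pullback.lift_snd_assoc, Category.id_comp, Category.comp_id, pb_id_left f, pb_id_right f, pb_self f]

/-- The glue data: two copies of `Y` glued along `X`. -/
def gd : Scheme.GlueData.{u} where
  J := ULift Bool
  U _ := Y
  V p := Vmk X Y p.1.down p.2.down
  f i j := fmk f i.down j.down
  f_mono i j := by
    rcases i with ⟨(_ | _)⟩ <;> rcases j with ⟨(_ | _)⟩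
    · exact inferInstanceAs (Mono (𝟙 Y))
    · exact inferInstanceAs (Mono f)
    · exact inferInstanceAs (Mono f)
    · exact inferInstanceAs (Mono (𝟙 Y))
  f_id i := by
    rcases i with ⟨(_ | _)⟩ <;> exact inferInstanceAs (IsIso (𝟙 Y))
  f_open i j := by
    rcases i with ⟨(_ | _)⟩ <;> rcases j with ⟨(_ | _)⟩
    · exact inferInstanceAs (IsOpenImmersion (𝟙 Y))
    · exact inferInstanceAs (IsOpenImmersion f)
    · exact inferInstanceAs (IsOpenImmersion f)
    · exact inferInstanceAs (IsOpenImmersion (𝟙 Y))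
  t i j := tmk i.down j.down
  t_id i := by rcases i with ⟨(_ | _)⟩ <;> rfl
  t' i j k := t'mk f i.down j.down k.down
  t_fac i j k := by
    rcases i with ⟨(_ | _)⟩ <;> rcases j with ⟨(_ | _)⟩ <;> rcases k with ⟨(_ | _)⟩
    · exact tfac_A (Y := Y)
    · exact tfac_B f
    · exact tfac_C f
    · exact tfac_D f
    · exact tfac_D f
    · exact tfac_C f
    · exact tfac_B f
    · exact tfac_A (Y := Y)
  cocycle i j k := by
    rcases i with ⟨(_ | _)⟩ <;> rcases j with ⟨(_ | _)⟩ <;> rcases k with ⟨(_ | _)⟩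
    · exact coc_A (Y := Y)
    · exact coc_BCD f
    · exact coc_CDB f
    · exact coc_DBC f
    · exact coc_DBC f
    · exact coc_CDB f
    · exact coc_BCD f
    · exact coc_A (Y := Y)

theorem glue_w : f ≫ (gd f).ι ⟨false⟩ = f ≫ (gd f).ι ⟨true⟩ := by
  have h := ((gd f).glue_condition ⟨false⟩ ⟨true⟩).symm
  have h2 : (𝟙 X : X ⟶ X) ≫ f ≫ (gd f).ι ⟨true⟩ = f ≫ (gd f).ι ⟨true⟩ :=
    Category.id_comp _
  exact h.trans h2

/-- The descent morphism out of the glued scheme. -/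
def pdesc (s : PushoutCocone f f) : (gd f).glued ⟶ s.pt :=
  Multicoequalizer.desc (gd f).diagram s.pt (fun i => bif i.down then s.inr else s.inl)
    (by
      rintro ⟨⟨(_ | _)⟩, ⟨(_ | _)⟩⟩
      · exact show (𝟙 Y) ≫ s.inl = (𝟙 _ ≫ 𝟙 Y) ≫ s.inl by simp
      · exact show f ≫ s.inl = (𝟙 _ ≫ f) ≫ s.inr by
          rw [Category.id_comp]; exact s.condition
      · exact show f ≫ s.inr = (𝟙 _ ≫ f) ≫ s.inl by
          rw [Category.id_comp]; exact s.condition.symm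
      · exact show (𝟙 Y) ≫ s.inr = (𝟙 _ ≫ 𝟙 Y) ≫ s.inr by simp)

lemma ι_pdesc_false (s : PushoutCocone f f) : (gd f).ι ⟨false⟩ ≫ pdesc f s = s.inl :=
  Multicoequalizer.π_desc _ _ _ _ _

lemma ι_pdesc_true (s : PushoutCocone f f) : (gd f).ι ⟨true⟩ ≫ pdesc f s = s.inr :=
  Multicoequalizer.π_desc _ _ _ _ _

/-- The pushout cocone is a colimit. -/
def pushoutIsColimit :
    IsColimit (PushoutCocone.mk ((gd f).ι ⟨false⟩) ((gd f).ι ⟨true⟩) (glue_w f)) := by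
  refine PushoutCocone.IsColimit.mk _ (pdesc f) (ι_pdesc_false f) (ι_pdesc_true f)
    (fun s m h₁ h₂ => ?_)
  apply Multicoequalizer.hom_ext
  rintro ⟨(_ | _)⟩
  · exact h₁.trans (ι_pdesc_false f s).symm
  · exact h₂.trans (ι_pdesc_true f s).symm

/-- The fork is a limit, i.e. `f` equalizes the two inclusions. -/
def forkIsLimit : IsLimit (Fork.ofι f (glue_w f)) := by
  refine Fork.IsLimit.mk' _ fun s => ?_
  obtain ⟨l, hl, -⟩ := PullbackCone.IsLimit.lift'
    ((gd f).vPullbackConeIsLimit ⟨false⟩ ⟨true⟩) s.ι s.ι s.condition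
  refine ⟨l, hl, fun {m} hmm => ?_⟩
  refine (cancel_mono f).1 ?_
  exact (show m ≫ f = s.ι from hmm).trans (show s.ι = l ≫ f from hl.symm)

end OpenImmersionRegularMonoAux

end OpenImmersionRegularMonoAux

open OpenImmersionRegularMonoAux in
/-- Every open immersion of schemes is a regular monomorphism: if `f : X ⟶ Y`
is an open immersion, then the pushout `Y ⊔_X Y` of `Y ← X → Y` exists, and `f` is the
equalizer of the two canonical inclusions `Y ⇉ Y ⊔_X Y`. -/
theorem openImmersion_regularMono {X Y : Scheme} (f : X ⟶ Y) [IsOpenImmersion f] :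
    ∃ (Z : Scheme) (i₁ i₂ : Y ⟶ Z) (w : f ≫ i₁ = f ≫ i₂),
      Nonempty (IsColimit (PushoutCocone.mk i₁ i₂ w)) ∧
      Nonempty (IsLimit (Fork.ofι f w)) := by
  exact ⟨(gd f).glued, (gd f).ι ⟨false⟩, (gd f).ι ⟨true⟩, glue_w f,
    ⟨pushoutIsColimit f⟩, ⟨forkIsLimit f⟩⟩
end

section
/- Let X be a scheme and x, y ∈ X points. Then x specializes to y if and only if there exists a valuation ring R and a morphism f : Spec R → X such that f sends the closed point (maximal ideal) of Spec R to y and x lies in the image of f. -/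
open CategoryTheory AlgebraicGeometry IsLocalRing

/-- In a scheme `X`, a point `x` specializes to a point `y` if and only if
there is a valuation ring `R` and a morphism `f : Spec R ⟶ X` sending the closed point
(the maximal ideal) of `Spec R` to `y`, with `x` in the image of `f`. -/
theorem specializes_iff_valuationRing {X : Scheme.{u}} (x y : X) :
    x ⤳ y ↔
      ∃ (R : Type u) (_ : CommRing R) (_ : IsDomain R) (_ : ValuationRing R)
        (f : Spec (CommRingCat.of R) ⟶ X),
        f.base (IsLocalRing.closedPoint R) = y ∧ x ∈ Set.range f.base := by
  constructor
  · intro h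
    let stalk_y_to_residue_x : X.presheaf.stalk y ⟶ X.residueField x :=
      X.presheaf.stalkSpecializes h ≫ X.residue x
    obtain ⟨A, hA, hA_local⟩ := exists_factor_valuationRing stalk_y_to_residue_x.hom
    let stalk_y_to_A : X.presheaf.stalk y ⟶ .of A :=
      CommRingCat.ofHom (stalk_y_to_residue_x.hom.codRestrict _ hA)
    refine ⟨A, inferInstance, inferInstance, inferInstance,
      Spec.map stalk_y_to_A ≫ X.fromSpecStalk y, ?_, ?_⟩
    · change (X.fromSpecStalk y).base ((Spec.map stalk_y_to_A).base (closedPoint A)) = y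
      have : (Spec.map stalk_y_to_A).base (closedPoint A) = closedPoint (X.presheaf.stalk y) :=
        comap_closedPoint (S := A) (stalk_y_to_residue_x.hom.codRestrict A.toSubring hA)
      rw [this, X.fromSpecStalk_closedPoint]
    · have w : X.fromSpecResidueField x =
          Spec.map (CommRingCat.ofHom (algebraMap A (X.residueField x))) ≫
            Spec.map stalk_y_to_A ≫ X.fromSpecStalk y := by
        rw [Scheme.fromSpecResidueField, ← Scheme.SpecMap_stalkSpecializes_fromSpecStalk h]
        simp_rw [← Spec.map_comp_assoc]
        rfl
      refine ⟨(Spec.map (CommRingCat.ofHom (algebraMap A (X.residueField x)))).base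
        (closedPoint (X.residueField x)), ?_⟩
      change (Spec.map (CommRingCat.ofHom (algebraMap A (X.residueField x))) ≫
        Spec.map stalk_y_to_A ≫ X.fromSpecStalk y).base (closedPoint (X.residueField x)) = x
      rw [← w]
      exact X.fromSpecResidueField_apply x _
  · rintro ⟨R, _, _, _, f, hf, z, rfl⟩
    rw [← hf]
    exact (specializes_closedPoint (R := R) z).map f.base.hom.2
end

section
/- Let f : X → Y be an immersion of schemes. Suppose that for every affine open Y' ⊆ Y with preimage X' = f⁻¹(Y'), and every closed point y of Y' not in the image of X' → Y', the induced map X' ⊔ Spec κ(y) → Y' is an immersion. Then f is a closed immersion. -/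
open CategoryTheory CategoryTheory.Limits AlgebraicGeometry

/-- Let `f : X ⟶ Y` be an immersion of schemes.  Suppose that for every affine
open `Y' ⊆ Y` (with preimage `X' = f ⁻¹ᵁ Y'` and restricted morphism `X' ⟶ Y'`) and every
closed point `y` of `Y'` not in the image of `X' ⟶ Y'`, the induced morphism
`X' ⊔ Spec κ(y) ⟶ Y'` is an immersion.  Then `f` is a closed immersion. -/
theorem isClosedImmersion_of_immersion_disjoint_closed_points {X Y : Scheme}
    (f : X ⟶ Y) [IsImmersion f]
    (H : ∀ U : Y.Opens, IsAffineOpen U → ∀ y : U.toScheme,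
      IsClosed ({y} : Set U.toScheme) → y ∉ Set.range (f ∣_ U).base →
      IsImmersion (coprod.desc (f ∣_ U) (U.toScheme.fromSpecResidueField y))) :
    IsClosedImmersion f := by
  apply IsClosedImmersion.of_isPreimmersion
  rw [← closure_subset_iff_isClosed]
  intro y hy
  by_contra hyr
  -- choose an affine open neighbourhood `U` of `y`
  obtain ⟨U, hU, hyU, -⟩ : ∃ U : Y.Opens, U ∈ Y.affineOpens ∧ y ∈ U ∧ U ≤ ⊤ :=
    TopologicalSpace.Opens.isBasis_iff_nbhd.mp (Y.isBasis_affineOpens)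
      (U := ⊤) (trivial : y ∈ (⊤ : Y.Opens))
  have : IsAffine U.toScheme := hU
  set S : Set U.toScheme := Set.range (f ∣_ U).base with hSdef
  have hS : S = (Subtype.val ⁻¹' Set.range f.base : Set U.toScheme) := by
    rw [hSdef, morphismRestrict_base]; exact Set.range_restrictPreimage _ _
  set y' : U.toScheme := ⟨y, hyU⟩ with hy'def
  -- `y'` is in the closure of `S` inside `U`
  have hy' : y' ∈ closure S := by
    rw [hS, mem_closure_iff]
    intro o ho hyo
    obtain ⟨V, hV, rfl⟩ := isOpen_induced_iff.mp ho
    have hmem : y ∈ V ∩ (U : Set Y) := ⟨hyo, hyU⟩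
    obtain ⟨w, ⟨hwV, hwU⟩, hwf⟩ :=
      mem_closure_iff.mp hy (V ∩ (U : Set Y)) (hV.inter U.isOpen) hmem
    exact ⟨⟨w, hwU⟩, hwV, hwf⟩
  have hy'S : y' ∉ S := by
    intro h
    rw [hS] at h
    exact hyr h
  -- the set `closure S \ S` is a nonempty closed subset of affine `U`
  have hImm : IsImmersion (f ∣_ U) := IsZariskiLocalAtTarget.restrict ‹IsImmersion f› U
  have hlc : IsLocallyClosed S := (f ∣_ U).isLocallyClosed_range
  have hCclosed : IsClosed (closure S \ S) := by
    have := hlc.isOpen_coborder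
    rw [coborder] at this
    simpa using this.isClosed_compl
  obtain ⟨z, ⟨hzcl, hzS⟩, hz⟩ :=
    hCclosed.exists_closed_singleton (S := closure S \ S) ⟨y', hy', hy'S⟩
  -- apply the hypothesis to the closed point `z`
  have hg : IsImmersion (coprod.desc (f ∣_ U) (U.toScheme.fromSpecResidueField z)) := H U hU z hz hzS
  set g := coprod.desc (f ∣_ U) (U.toScheme.fromSpecResidueField z) with hgdef
  -- the image of `Spec κ(z)` is open in the image of `g`
  have hA : IsOpen (Set.range (coprod.inr :
      Spec (U.toScheme.residueField z) ⟶ (f ⁻¹ᵁ U).toScheme ⨿ _).base) :=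
    IsOpenImmersion.isOpen_range _
  obtain ⟨V, hV, hVA⟩ := (g.isEmbedding.isInducing.isOpen_iff).mp hA
  have himg : g.base '' (Set.range (coprod.inr :
      Spec (U.toScheme.residueField z) ⟶ (f ⁻¹ᵁ U).toScheme ⨿ _).base) = {z} := by
    rw [← Set.range_comp]
    have : g.base ∘ (coprod.inr :
        Spec (U.toScheme.residueField z) ⟶ (f ⁻¹ᵁ U).toScheme ⨿ _).base
        = ((coprod.inr ≫ g).base : _) := by
      rw [Scheme.Hom.comp_base]; rfl
    rw [this, hgdef, coprod.inr_desc]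
    exact U.toScheme.range_fromSpecResidueField z
  rw [← hVA, Set.image_preimage_eq_inter_range] at himg
  -- `V` is an open neighbourhood of `z` disjoint from `S`
  have hzV : z ∈ V := by
    have : z ∈ V ∩ Set.range g.base := himg ▸ rfl
    exact this.1
  have hVS : V ∩ S = ∅ := by
    ext s
    simp only [Set.mem_inter_iff, Set.mem_empty_iff_false, iff_false, not_and]
    intro hsV hsS
    have hsg : s ∈ Set.range g.base := by
      obtain ⟨x, hx⟩ := hsS
      refine ⟨(coprod.inl : (f ⁻¹ᵁ U).toScheme ⟶
        (f ⁻¹ᵁ U).toScheme ⨿ Spec (U.toScheme.residueField z)).base x, ?_⟩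
      rw [← Scheme.Hom.comp_apply, hgdef, coprod.inl_desc]
      exact hx
    have : s ∈ ({z} : Set _) := himg ▸ ⟨hsV, hsg⟩
    rw [Set.mem_singleton_iff] at this
    subst this
    exact hzS hsS
  -- contradiction with `z ∈ closure S`
  obtain ⟨w, hwV, hwS⟩ := mem_closure_iff.mp hzcl V hV hzV
  rw [Set.eq_empty_iff_forall_notMem] at hVS
  exact hVS w ⟨hwV, hwS⟩
end

section
/- Let A be a commutative ring and let B = A ⊕ I be a commutative A-algebra with a surjection π : B → A of A-algebras with kernel I, such that B admits an A-algebra homomorphism m : B ×_A B → A ⊕ I ⊕ I → B (where B ×_A B ≅ A ⊕ I ⊕ I) making B into an abelian group object in the category of augmented A-algebras. Then I² = 0, and m is given by (a, b, c) ↦ (a, b + c). -/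
/-- Let `B` be an augmented commutative `A`-algebra, with augmentation
`π : B →ₐ[A] A` (so `B ≅ A ⊕ I` with `I = ker π`, and the unit section is
`σ = algebraMap A B`).  Suppose `m` is a multiplication on `B` in the category of augmented
`A`-algebras, i.e. an `A`-algebra homomorphism on the fiber product
`B ×_A B = {(x, y) | π x = π y}` compatible with the augmentations, which admits
`σ ∘ π` as a two-sided unit (so that `(B, m)` is an abelian group object).  Then `I² = 0`
and `m` is given on `A ⊕ I ⊕ I` by `(a, b, c) ↦ (a, b + c)`, i.e.
`m x y = x + y - σ (π x)`. -/
theorem augmented_group_object_square_zero {A B : Type*} [CommRing A] [CommRing B]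
    [Algebra A B] (π : B →ₐ[A] A) (m : B → B → B)
    -- `m` respects the augmentation
    (haug : ∀ x y, π x = π y → π (m x y) = π x)
    -- `m` is additive on the fiber product `B ×_A B`
    (hadd : ∀ x y x' y', π x = π y → π x' = π y' →
      m (x + x') (y + y') = m x y + m x' y')
    -- `m` is multiplicative on the fiber product `B ×_A B`
    (hmul : ∀ x y x' y', π x = π y → π x' = π y' →
      m (x * x') (y * y') = m x y * m x' y')
    -- `m` is `A`-linear/unital: it sends the diagonal image of `A` to itself
    (halg : ∀ a : A, m (algebraMap A B a) (algebraMap A B a) = algebraMap A B a)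
    -- the unit laws: `σ ∘ π` is a two-sided unit for `m`
    (hunit₁ : ∀ x, m x (algebraMap A B (π x)) = x)
    (hunit₂ : ∀ x, m (algebraMap A B (π x)) x = x) :
    (∀ i ∈ RingHom.ker (π : B →+* A), ∀ j ∈ RingHom.ker (π : B →+* A), i * j = 0) ∧
    (∀ x y, π x = π y → m x y = x + y - algebraMap A B (π x)) := by
  -- key facts: m i 0 = i and m 0 j = j for i, j in the kernel
  have hker : ∀ i : B, π i = 0 → m i 0 = i := by
    intro i hi
    have := hunit₁ i
    rwa [hi, map_zero] at this
  have hker' : ∀ j : B, π j = 0 → m 0 j = j := by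
    intro j hj
    have := hunit₂ j
    rwa [hj, map_zero] at this
  have hzero : m 0 0 = (0 : B) := hker 0 (map_zero π)
  constructor
  · intro i hi j hj
    have hi' : π i = 0 := hi
    have hj' : π j = 0 := hj
    have h := hmul i 0 0 j (by simp [hi']) (by simp [hj'])
    rw [mul_zero, zero_mul, hzero, hker i hi', hker' j hj'] at h
    simpa using h.symm
  · intro x y hxy
    set a := π x with ha
    have hx : π (x - algebraMap A B a) = 0 := by simp [ha]
    have hy : π (y - algebraMap A B a) = 0 := by simp [hxy, ha]
    have h := hadd (algebraMap A B a) (algebraMap A B a)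
      (x - algebraMap A B a + 0) (0 + (y - algebraMap A B a)) rfl (by simp [hx, hy])
    rw [halg a] at h
    have h2 := hadd (x - algebraMap A B a) 0 0 (y - algebraMap A B a) (by simp [hx]) (by simp [hy])
    rw [hker _ hx, hker' _ hy] at h2
    rw [h2] at h
    have : m x y = algebraMap A B a + (x - algebraMap A B a + (y - algebraMap A B a)) := by
      have e : algebraMap A B a + (x - algebraMap A B a + 0) = x := by ring
      have e' : algebraMap A B a + (0 + (y - algebraMap A B a)) = y := by ring
      rw [e, e'] at h
      exact h
    rw [this]; ring
end

section
/- Let R be a commutative ring and I ⊆ R a pure ideal (i.e., R/I is flat as an R-module). Then the closed subset V(I) ⊆ Spec R is stable under generalization: if 𝔭 ∈ V(I) and 𝔮 ⊆ 𝔭 is a prime, then 𝔮 ∈ V(I). -/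
open TensorProduct

lemma pure_of_flat_quotient {R : Type*} [CommRing R] (I : Ideal R)
    (hI : Module.Flat R (R ⧸ I)) : ∀ x ∈ I, ∃ a ∈ I, a * x = x := by
  intro x hx
  set J : Ideal R := Ideal.span {x}
  have hinj := Module.Flat.iff_rTensor_injective'.mp hI J
  have hxJ : x ∈ J := Ideal.subset_span rfl
  have h0 : (LinearMap.rTensor (R ⧸ I) J.subtype)
      ((⟨x, hxJ⟩ : J) ⊗ₜ[R] (1 : R ⧸ I)) = 0 := by
    rw [LinearMap.rTensor_tmul]
    have h1 : (J.subtype ⟨x, hxJ⟩ : R) = x • (1 : R) := by simp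
    rw [h1, smul_tmul]
    have h2 : x • (1 : R ⧸ I) = 0 := by
      rw [Algebra.smul_def, mul_one]
      exact Ideal.Quotient.eq_zero_iff_mem.mpr hx
    rw [h2, tmul_zero]
  have hz : (⟨x, hxJ⟩ : J) ⊗ₜ[R] (1 : R ⧸ I) = 0 := hinj (by simpa using h0)
  have hmem : (⟨x, hxJ⟩ : J) ∈ (I • ⊤ : Submodule R J) := by
    rw [← Submodule.Quotient.mk_eq_zero]
    have h3 : (TensorProduct.tensorQuotEquivQuotSMul (J : Type _) I).symm
        (Submodule.Quotient.mk (⟨x, hxJ⟩ : J)) = (⟨x, hxJ⟩ : J) ⊗ₜ[R] 1 :=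
      TensorProduct.tensorQuotEquivQuotSMul_symm_mk I _
    have h4 := congrArg (TensorProduct.tensorQuotEquivQuotSMul (J : Type _) I) h3
    rw [LinearEquiv.apply_symm_apply, hz, LinearEquiv.map_zero] at h4
    exact h4
  have hxIJ : x ∈ I • J := by
    have := Submodule.mem_map_of_mem (f := J.subtype) hmem
    rwa [Submodule.map_smul'', Submodule.map_top, Submodule.range_subtype] at this
  rw [show (J : Submodule R R) = Submodule.span R {x} from rfl,
    Submodule.mem_smul_span_singleton] at hxIJ
  obtain ⟨a, ha, hax⟩ := hxIJ
  exact ⟨a, ha, by simpa [smul_eq_mul] using hax⟩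

/-- If `I` is a pure ideal of a commutative ring `R` (i.e. `R/I` is flat as an
`R`-module), then the closed subset `V(I) ⊆ Spec R` is stable under generalization: if a
prime `𝔭` contains `I` and `𝔮 ⊆ 𝔭` is a prime, then `𝔮` contains `I`. -/
theorem pure_ideal_zeroLocus_stableUnderGeneralization (R : Type*) [CommRing R]
    (I : Ideal R) (hI : Module.Flat R (R ⧸ I)) :
    ∀ p ∈ PrimeSpectrum.zeroLocus (I : Set R), ∀ q : PrimeSpectrum R,
      q.asIdeal ≤ p.asIdeal → q ∈ PrimeSpectrum.zeroLocus (I : Set R) := by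
  intro p hp q hq
  intro x hx
  obtain ⟨a, ha, hax⟩ := pure_of_flat_quotient I hI x hx
  have h1 : (1 - a) * x = 0 := by linear_combination -hax
  have hzero : (1 - a) * x ∈ q.asIdeal := by rw [h1]; exact zero_mem _
  rcases q.isPrime.mem_or_mem hzero with h | h
  · exfalso
    have hap : a ∈ p.asIdeal := hp ha
    have : (1 : R) ∈ p.asIdeal := by simpa using p.asIdeal.add_mem (hq h) hap
    exact p.isPrime.ne_top (Ideal.eq_top_of_isUnit_mem _ this isUnit_one)
  · exact h
end

section
/- Let X be a topological space that is nonempty, connected, and in which the collection of locally closed subsets containing a fixed point x is linearly ordered by inclusion. Then every point of X specializes to x, or every point of X generalizes to x (i.e., for all y ∈ X, x ∈ closure({y}); or for all y ∈ X, y ∈ closure({x})). -/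
/-- Auxiliary lemma: if some open set containing `x` is contained in `closure {x}` and
some point `b` lies outside `closure {x}`, then a connected space with the locally closed
chain condition at `x` yields a contradiction. -/
lemma auxA_locallyClosed_chain {X : Type*} [TopologicalSpace X] [ConnectedSpace X]
    (x b : X)
    (h : ∀ U V : Set X, IsLocallyClosed U → IsLocallyClosed V → x ∈ U → x ∈ V →
      U ⊆ V ∨ V ⊆ U)
    (U : Set X) (hU : IsOpen U) (hxU : x ∈ U) (hUK : U ⊆ closure ({x} : Set X))
    (hb : b ∉ closure ({x} : Set X)) : False := by
  set K := closure ({x} : Set X) with hKdef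
  have hKc : IsClosed K := isClosed_closure
  have hxK : x ∈ K := subset_closure rfl
  set A := ⋃₀ {W : Set X | IsOpen W ∧ x ∈ W ∧ W ⊆ K} with hAdef
  have hAo : IsOpen A := isOpen_sUnion (fun W hW => hW.1)
  have hxA : x ∈ A := ⟨U, ⟨hU, hxU, hUK⟩, hxU⟩
  have hAK : A ⊆ K := Set.sUnion_subset fun W hW => hW.2.2
  by_cases hKA : K ⊆ A
  · -- A = K is clopen, nonempty, proper: contradiction with connectedness
    have hAcl : IsClosed A := (Set.Subset.antisymm hAK hKA) ▸ hKc
    rcases isClopen_iff.mp ⟨hAcl, hAo⟩ with h1 | h1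
    · exact absurd hxA (h1 ▸ Set.notMem_empty x)
    · exact hb (hAK (h1 ▸ Set.mem_univ b))
  · rw [Set.not_subset] at hKA
    obtain ⟨z, hzK, hzA⟩ := hKA
    by_cases hxz : x ∈ closure ({z} : Set X)
    · -- every open set containing x contains z, in particular A does
      obtain ⟨w, hwA, hwz⟩ := mem_closure_iff.mp hxz A hAo hxA
      exact hzA (hwz ▸ hwA)
    · set V := (closure ({z} : Set X))ᶜ with hVdef
      have hVo : IsOpen V := isClosed_closure.isOpen_compl
      have hxV : x ∈ V := hxz
      rcases h V K hVo.isLocallyClosed hKc.isLocallyClosed hxV hxK with hVK | hKV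
      · have hVA : V ⊆ A := Set.subset_sUnion_of_mem ⟨hVo, hxV, hVK⟩
        have hzx : closure ({z} : Set X) ⊆ K :=
          closure_minimal (Set.singleton_subset_iff.mpr hzK) hKc
        apply hb
        by_cases hbA : b ∈ A
        · exact hAK hbA
        · have hbz : b ∈ closure ({z} : Set X) := by
            have := Set.compl_subset_compl.mpr hVA hbA
            rwa [hVdef, compl_compl] at this
          exact hzx hbz
      · exact (hKV hzK) (subset_closure rfl)

/-- Let `X` be a nonempty connected topological space in which the locally
closed subsets containing a fixed point `x` are linearly ordered by inclusion.  Then either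
every point of `X` specializes to `x`, or every point of `X` generalizes to `x`. -/
theorem specializes_or_generalizes_of_locallyClosed_chain {X : Type*} [TopologicalSpace X]
    [Nonempty X] [ConnectedSpace X] (x : X)
    (h : ∀ U V : Set X, IsLocallyClosed U → IsLocallyClosed V → x ∈ U → x ∈ V →
      U ⊆ V ∨ V ⊆ U) :
    (∀ y : X, x ∈ closure ({y} : Set X)) ∨ (∀ y : X, y ∈ closure ({x} : Set X)) := by
  by_contra hcon
  push_neg at hcon
  obtain ⟨⟨a, ha⟩, ⟨b, hb⟩⟩ := hcon
  set K := closure ({x} : Set X) with hKdef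
  have hKc : IsClosed K := isClosed_closure
  have hxK : x ∈ K := subset_closure rfl
  -- no open set containing x is contained in K
  have noOpen : ∀ W : Set X, IsOpen W → x ∈ W → ¬ (W ⊆ K) := by
    intro W hWo hxW hWK
    exact auxA_locallyClosed_chain x b h W hWo hxW hWK hb
  set V := (closure ({a} : Set X))ᶜ with hVdef
  have hVo : IsOpen V := isClosed_closure.isOpen_compl
  have hxV : x ∈ V := ha
  -- D := intersection of all closed sets containing x and V
  set D := ⋂₀ {C : Set X | IsClosed C ∧ x ∈ C ∧ V ⊆ C} with hDdef
  have hDc : IsClosed D := isClosed_sInter (fun C hC => hC.1)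
  have hVD : V ⊆ D := Set.subset_sInter (fun C hC => hC.2.2)
  by_cases hDV : D ⊆ V
  · -- V = D is clopen, nonempty, proper: contradiction
    have hVcl : IsClosed V := (Set.Subset.antisymm hVD hDV).symm ▸ hDc
    rcases isClopen_iff.mp ⟨hVcl, hVo⟩ with h1 | h1
    · exact absurd hxV (h1 ▸ Set.notMem_empty x)
    · exact (h1 ▸ Set.mem_univ a : a ∈ V) (subset_closure rfl)
  · rw [Set.not_subset] at hDV
    obtain ⟨z, hzD, hzV⟩ := hDV
    have hxz : x ∉ closure ({z} : Set X) := by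
      intro hxz
      obtain ⟨w, hwV, hwz⟩ := mem_closure_iff.mp hxz V hVo hxV
      exact hzV (hwz ▸ hwV)
    -- V ⊆ closure {z} ∪ K
    have hVsub : V ⊆ closure ({z} : Set X) ∪ K := by
      have hCc : IsClosed (closure ({z} : Set X) ∪ K) := isClosed_closure.union hKc
      have hxC : x ∈ closure ({z} : Set X) ∪ K := Or.inr hxK
      rcases h (closure ({z} : Set X) ∪ K) V hCc.isLocallyClosed hVo.isLocallyClosed
        hxC hxV with hCV | hVC
      · exact absurd (hCV (Or.inl (subset_closure rfl))) hzV
      · exact hVC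
    set W := (closure ({z} : Set X))ᶜ with hWdef
    have hWo : IsOpen W := isClosed_closure.isOpen_compl
    have hxW : x ∈ W := hxz
    rcases h W V hWo.isLocallyClosed hVo.isLocallyClosed hxW hxV with hWV | hVW
    · -- Vᶜ ⊆ closure {z}, hence W ⊆ K
      apply noOpen W hWo hxW
      intro w hwW
      have hwV : w ∈ V := hWV hwW
      rcases hVsub hwV with h1 | h1
      · exact absurd h1 hwW
      · exact h1
    · -- V ∩ closure {z} = ∅, hence V ⊆ K
      apply noOpen V hVo hxV
      intro w hwV
      rcases hVsub hwV with h1 | h1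
      · exact absurd h1 (hVW hwV)
      · exact h1
end

section
/- Let X be a topological space in which the collection of locally closed subsets containing a fixed point x is linearly ordered by inclusion, and suppose every point of X specializes to x. Then the closures V(y) = closure({y}) for y ∈ X are linearly ordered: for all y, z ∈ X, either closure({y}) ⊆ closure({z}) or closure({z}) ⊆ closure({y}). In particular, X is irreducible. -/
/-- Let `X` be a topological space in which the locally closed subsets
containing a fixed point `x` are linearly ordered by inclusion, and suppose every point of
`X` specializes to `x`.  Then the closures of points are linearly ordered by inclusion, and
in particular `X` is irreducible. -/
theorem closures_linearly_ordered_of_locallyClosed_chain {X : Type*} [TopologicalSpace X]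
    (x : X)
    (h : ∀ U V : Set X, IsLocallyClosed U → IsLocallyClosed V → x ∈ U → x ∈ V →
      U ⊆ V ∨ V ⊆ U)
    (hs : ∀ y : X, x ∈ closure ({y} : Set X)) :
    (∀ y z : X, closure ({y} : Set X) ⊆ closure ({z} : Set X) ∨
      closure ({z} : Set X) ⊆ closure ({y} : Set X)) ∧ IrreducibleSpace X := by
  have lin : ∀ y z : X, closure ({y} : Set X) ⊆ closure ({z} : Set X) ∨
      closure ({z} : Set X) ⊆ closure ({y} : Set X) := fun y z =>
    h _ _ isClosed_closure.isLocallyClosed isClosed_closure.isLocallyClosed (hs y) (hs z)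
  have pre : PreirreducibleSpace X := ⟨fun U V hU hV ⟨y, hy⟩ ⟨z, hz⟩ => ?_⟩
  · exact ⟨lin, @IrreducibleSpace.mk X _ pre ⟨x⟩⟩
  rcases lin y z with hc | hc
  · have hyz : y ∈ closure ({z} : Set X) := hc (subset_closure rfl)
    obtain ⟨w, hwU, hw⟩ := mem_closure_iff.mp hyz U hU hy.2
    exact ⟨w, Set.mem_univ w, hwU, hw ▸ hz.2⟩
  · have hzy : z ∈ closure ({y} : Set X) := hc (subset_closure rfl)
    obtain ⟨w, hwV, hw⟩ := mem_closure_iff.mp hzy V hV hz.2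
    exact ⟨w, Set.mem_univ w, hw ▸ hy.2, hwV⟩
end

section
/- Let X be a scheme and suppose Spec k → X is a monomorphism of schemes from the spectrum of a field k. Then there exists a unique point x ∈ X and a unique isomorphism Spec k ≅ Spec κ(x) over X, where κ(x) is the residue field of x. -/
open CategoryTheory AlgebraicGeometry

universe v

open TensorProduct in
lemma aux_surjective_of_epi {K L : Type v} [Field K] [Field L] (φ : K →+* L)
    (h : Epi (CommRingCat.ofHom φ : CommRingCat.of K ⟶ CommRingCat.of L)) :
    Function.Surjective φ := by
  letI : Algebra K L := φ.toAlgebra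
  have halg : algebraMap K L = φ := rfl
  have htm : ∀ a : L, a ⊗ₜ[K] (1 : L) = (1 : L) ⊗ₜ a := by
    have := (Algebra.isEpi_iff_forall_one_tmul_eq K L).mp (CommRingCat.epi_iff_epi.mp h)
    exact fun a => (this a).symm
  intro a
  have hmem : a ∈ Submodule.span K ({(1 : L)} : Set L) := by
    by_contra hna
    obtain ⟨g, hga, hgmap⟩ :=
      (Submodule.span K ({(1 : L)} : Set L)).exists_dual_map_eq_bot_of_notMem hna inferInstance
    have hg1 : g 1 = 0 := by
      have h1 : g 1 ∈ (Submodule.span K ({(1 : L)} : Set L)).map g :=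
        ⟨1, Submodule.mem_span_singleton_self 1, rfl⟩
      rw [hgmap] at h1
      simpa using h1
    let F : L ⊗[K] L →ₗ[K] L :=
      (TensorProduct.lid K L).toLinearMap ∘ₗ (LinearMap.rTensor L g)
    have := congrArg F (htm a)
    have hF1 : F (a ⊗ₜ[K] (1 : L)) = g a • (1 : L) := by
      simp [F]
    have hF2 : F ((1 : L) ⊗ₜ[K] a) = g 1 • a := by
      simp [F]
    rw [hF1, hF2, hg1, zero_smul] at this
    apply hga
    have : algebraMap K L (g a) = 0 := by
      rw [Algebra.algebraMap_eq_smul_one]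
      exact this
    exact (algebraMap K L).injective (by simpa using this)
  obtain ⟨c, hc⟩ := Submodule.mem_span_singleton.mp hmem
  exact ⟨c, by rw [← hc, Algebra.smul_def, mul_one, halg]⟩

/-- If `Spec k ⟶ X` is a monomorphism of schemes from the spectrum of a field
`k`, then there is a unique point `x ∈ X` and a unique isomorphism
`Spec k ≅ Spec κ(x)` over `X` (where `Spec κ(x) ⟶ X` is the canonical residue field
morphism). -/
theorem mono_from_spec_field {X : Scheme.{u}} (k : Type u) [Field k]
    (f : Spec (CommRingCat.of k) ⟶ X) [Mono f] :
    ∃! x : X, ∃! e : Spec (CommRingCat.of k) ≅ Spec (X.residueField x),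
      e.hom ≫ X.fromSpecResidueField x = f := by
  set x : X := f.base (IsLocalRing.closedPoint k) with hxdef
  set φ : X.residueField x ⟶ CommRingCat.of k :=
    X.descResidueField (Scheme.stalkClosedPointTo f) with hφdef
  have hf : Spec.map φ ≫ X.fromSpecResidueField x = f :=
    Scheme.descResidueField_stalkClosedPointTo_fromSpecResidueField k X f
  -- `Spec.map φ` is a mono
  have hmonoSpec : Mono (Spec.map φ) := by
    have : Mono (Spec.map φ ≫ X.fromSpecResidueField x) := hf ▸ ‹Mono f›
    exact mono_of_mono (Spec.map φ) (X.fromSpecResidueField x)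
  -- hence `φ` is an epi
  have hmonoOp : Mono φ.op := Scheme.Spec.mono_of_mono_map hmonoSpec
  have hepi : Epi φ := CategoryTheory.unop_epi_of_mono φ.op
  -- hence `φ` is surjective, so bijective
  have hsurj : Function.Surjective φ := aux_surjective_of_epi (K := X.residueField x) (L := k) φ.hom hepi
  have hbij : Function.Bijective φ := ⟨RingHom.injective (φ.hom : _ →+* k), hsurj⟩
  -- build the ring equiv and the iso of schemes
  let ψ := RingEquiv.ofBijective (φ.hom : _ →+* k) hbij
  let σ : CommRingCat.of k ⟶ X.residueField x := CommRingCat.ofHom (ψ.symm : k →+* X.residueField x)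
  have hσφ : σ ≫ φ = 𝟙 (CommRingCat.of k) := by
    ext a
    exact ψ.apply_symm_apply a
  have hφσ : φ ≫ σ = 𝟙 (X.residueField x) := by
    ext a
    exact ψ.symm_apply_apply a
  let e : Spec (CommRingCat.of k) ≅ Spec (X.residueField x) :=
    { hom := Spec.map φ
      inv := Spec.map σ
      hom_inv_id := by rw [← Spec.map_comp, hσφ, Spec.map_id]
      inv_hom_id := by rw [← Spec.map_comp, hφσ, Spec.map_id] }
  refine ⟨x, ⟨e, hf, ?_⟩, ?_⟩
  · intro e' he'
    have : Mono (X.fromSpecResidueField x) := inferInstance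
    apply Iso.ext
    rw [← cancel_mono (X.fromSpecResidueField x), he']
    exact hf.symm ▸ rfl
  · rintro y ⟨e', he', -⟩
    have : f.base (IsLocalRing.closedPoint k) = y := by
      rw [← he']
      simp [Scheme.fromSpecResidueField_apply]
      exact Scheme.fromSpecResidueField_apply y _
    exact this.symm
end
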